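/- In MR^{(r)}, the colored ribbon basis satisfies the multiplication rule: R_{(I,u)} · R_{(J,v)} = R_{(I,u)·(J,v)} + R_{(I,u)▷(J,v)} if u_p = v_1, and R_{(I,u)} · R_{(J,v)} = R_{(I,u)·(J,v)} if u_p ≠ v_1, for all colored compositions (I,u) = (i_1,…,i_p; u_1,…,u_p) and (J,v) = (j_1,…,j_q; v_1,…,v_q). -/

import Mathlib

noncomputable section

namespace MR

/-- The Mantaci-Reutenauer algebra `MR^{(r)}`: the free associative `ℂ`-algebra on the
symbols `S_j^{(i)}` with `j ≥ 1` and `1 ≤ i ≤ r` (encoded as pairs `(j, i) : ℕ+ × Fin r`). -/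
abbrev MRAlg (r : ℕ) : Type := FreeAlgebra ℂ (ℕ+ × Fin r)

/-- A colored composition, encoded as a list of pairs (part, color)
with positive parts. -/
abbrev CComp (r : ℕ) : Type := List (ℕ+ × Fin r)

/-- The size (sum of the parts) of a colored composition. -/
def size {r : ℕ} (I : CComp r) : ℕ := (I.map fun p => (p.1 : ℕ)).sum

/-- `S^{(I,u)} = S_{i_1}^{(u_1)} ⋯ S_{i_p}^{(u_p)}`. -/
def S {r : ℕ} (I : CComp r) : MRAlg r := (I.map (FreeAlgebra.ι ℂ)).prod

/-- One coarsening step: replace a nonempty group of consecutive parts all of the same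
color by their sum, with that common color. -/
def Step {r : ℕ} (I J : CComp r) : Prop :=
  ∃ (pre mid post : CComp r) (b : Fin r) (m : ℕ+),
    mid ≠ [] ∧ (∀ p ∈ mid, p.2 = b) ∧
    (m : ℕ) = (mid.map fun p => (p.1 : ℕ)).sum ∧
    I = pre ++ mid ++ post ∧ J = pre ++ (m, b) :: post

/-- The partial order on colored compositions: `(J,v) ≤ (I,u)` iff `(J,v)` is obtained
from `(I,u)` by repeatedly replacing groups of consecutive parts of the same color by
their sums. -/
def CLe {r : ℕ} (J I : CComp r) : Prop := Relation.ReflTransGen Step I J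

/-- The colored ribbon `R_{(I,u)} = Σ_{(J,v) ≤ (I,u)} (−1)^{ℓ(I)−ℓ(J)} S^{(J,v)}`. -/
def Rib {r : ℕ} (I : CComp r) : MRAlg r :=
  ∑ᶠ J ∈ {J : CComp r | CLe J I}, ((-1 : ℂ) ^ (I.length - J.length)) • S J

end MR

namespace MR

variable {r : ℕ}

/-- Coarsening, defined recursively. `Co I M` means `M` is a coarsening of `I`. -/
inductive Co : CComp r → CComp r → Prop
  | nil : Co [] []
  | block (x : ℕ+ × Fin r) {I M : CComp r} : Co I M → Co (x :: I) (x :: M)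
  | merge (x y : ℕ+ × Fin r) {I M : CComp r} (h : x.2 = y.2) :
      Co ((x.1 + y.1, x.2) :: I) M → Co (x :: y :: I) M

lemma Co.refl : ∀ I : CComp r, Co I I
  | [] => Co.nil
  | x :: I => Co.block x (Co.refl I)

lemma Co.eq_nil_of_nil {M : CComp r} (h : Co [] M) : M = [] := by
  cases h; rfl

lemma Co.length_le {I M : CComp r} (h : Co I M) : M.length ≤ I.length := by
  induction h with
  | nil => simp
  | block x h ih => simpa using Nat.succ_le_succ ih
  | merge x y hc h ih => simp only [List.length_cons] at *; omega

lemma Co.head_ge {I M : CComp r} (h : Co I M) :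
    ∀ (x : ℕ+ × Fin r) (I' : CComp r), I = x :: I' →
      ∃ (n : ℕ+) (M' : CComp r), M = (n, x.2) :: M' ∧ x.1 ≤ n := by
  induction h with
  | nil => intro x I' hx; cases hx
  | @block z I0 M0 h ih =>
    intro x I' hx
    injection hx with h1 h2
    exact ⟨z.1, M0, by rw [← h1], by rw [← h1]⟩
  | merge z y hc h ih =>
    intro x I' hx
    injection hx with h1 h2
    obtain ⟨n, M', rfl, hn⟩ := ih (z.1 + y.1, z.2) _ rfl
    refine ⟨n, M', by rw [← h1], ?_⟩
    rw [← h1]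
    exact le_trans (le_of_lt (PNat.lt_add_right z.1 y.1)) hn

/-- Prepending a monochromatic block. -/
lemma Co.block_append : ∀ (k : ℕ) (B : CComp r), B.length = k → B ≠ [] →
    ∀ (c : Fin r) (n : ℕ+) (T T' : CComp r), (∀ p ∈ B, p.2 = c) →
    (n : ℕ) = size B → Co T T' → Co (B ++ T) ((n, c) :: T') := by
  intro k
  induction k with
  | zero => intro B hB hne; simp [List.length_eq_zero_iff] at hB; exact absurd hB hne
  | succ k ih =>
    intro B hB hne c n T T' hcol hsum hT
    match B with
    | [x] =>
      have h1 : x.1 = n := by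
        simp [size] at hsum
        exact_mod_cast hsum.symm
      have h2 : x.2 = c := hcol x (by simp)
      have hx : x = (n, c) := by cases x; simp_all
      rw [hx]
      simpa using Co.block (n, c) hT
    | x :: y :: B' =>
      have hcx : x.2 = c := hcol x (by simp)
      have hcy : y.2 = c := hcol y (by simp)
      have hlen : ((x.1 + y.1, x.2) :: B').length = k := by
        simp at hB ⊢; omega
      have key : Co (((x.1 + y.1, x.2) :: B') ++ T) ((n, c) :: T') := by
        apply ih _ hlen (by simp) c n T T'
        · intro p hp
          rcases List.mem_cons.1 hp with h | h
          · subst h; exact hcx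
          · exact hcol p (by simp [h])
        · simp only [size, List.map_cons, List.sum_cons] at hsum ⊢
          push_cast at hsum ⊢
          omega
        · exact hT
      simpa using Co.merge x y (hcx.trans hcy.symm) key

/-- Inversion: a coarsening with head `(n,c)` comes from a monochromatic block. -/
lemma Co.cons_inv {I M : CComp r} (h : Co I M) :
    ∀ (n : ℕ+) (c : Fin r) (K : CComp r), M = (n, c) :: K →
    ∃ B I₂, I = B ++ I₂ ∧ B ≠ [] ∧ (∀ p ∈ B, p.2 = c) ∧ (n : ℕ) = size B ∧ Co I₂ K := by
  induction h with
  | nil => intro n c K hM; cases hM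
  | block x h ih =>
    intro n c K hM
    injection hM with h1 h2
    subst h1; subst h2
    exact ⟨[(n, c)], _, rfl, by simp, by simp, by simp [size], h⟩
  | merge x y hc h ih =>
    intro n c K hM
    obtain ⟨B, I₂, hIB, hBne, hBcol, hBsum, hI₂⟩ := ih n c K hM
    obtain ⟨z, B', rfl⟩ := List.exists_cons_of_ne_nil hBne
    injection hIB with hz hI
    refine ⟨x :: y :: B', I₂, by rw [hI]; rfl, by simp, ?_, ?_, hI₂⟩
    · have hzc : z.2 = c := hBcol z (by simp)
      rw [← hz] at hzc
      intro p hp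
      rcases List.mem_cons.1 hp with h1 | h1
      · subst h1; exact hzc
      rcases List.mem_cons.1 h1 with h2 | h2
      · subst h2; exact hc.symm.trans hzc
      · exact hBcol p (by simp [h2])
    · simp only [size, List.map_cons, List.sum_cons] at hBsum ⊢
      rw [← hz] at hBsum
      push_cast at hBsum ⊢
      omega

lemma Co.trans : ∀ {K M : CComp r}, Co K M → ∀ {I : CComp r}, Co I K → Co I M := by
  intro K M h
  induction h with
  | nil => intro I hI; exact hI
  | @block x Kk Mk h ih =>
    intro I hI
    obtain ⟨B, I₂, rfl, hBne, hBcol, hBsum, hI₂⟩ := hI.cons_inv x.1 x.2 Kk (by simp)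
    exact Co.block_append B.length B rfl hBne x.2 x.1 _ _ hBcol hBsum (ih hI₂)
  | @merge x y Kk Mk hc h ih =>
    intro I hI
    obtain ⟨B₁, I₁, rfl, hB₁ne, hB₁col, hB₁sum, hI₁⟩ := hI.cons_inv x.1 x.2 (y :: Kk) (by simp)
    obtain ⟨B₂, I₂, rfl, hB₂ne, hB₂col, hB₂sum, hI₂⟩ := hI₁.cons_inv y.1 y.2 Kk (by simp)
    apply ih
    have key : Co ((B₁ ++ B₂) ++ I₂) ((x.1 + y.1, x.2) :: Kk) := by
      apply Co.block_append (B₁ ++ B₂).length _ rfl (by simp [hB₁ne]) x.2 (x.1 + y.1) I₂ Kk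
      · intro p hp
        rcases List.mem_append.1 hp with h1 | h1
        · exact hB₁col p h1
        · exact (hB₂col p h1).trans hc.symm
      · simp only [size, List.map_append, List.sum_append] at *
        push_cast
        omega
      · exact hI₂
    simpa using key

lemma step_cons {x : ℕ+ × Fin r} {I J : CComp r} (h : Step I J) : Step (x :: I) (x :: J) := by
  obtain ⟨pre, mid, post, b, m, h1, h2, h3, rfl, rfl⟩ := h
  exact ⟨x :: pre, mid, post, b, m, h1, h2, h3, by simp, by simp⟩

lemma step_merge {x y : ℕ+ × Fin r} {I : CComp r} (hc : x.2 = y.2) :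
    Step (x :: y :: I) ((x.1 + y.1, x.2) :: I) := by
  refine ⟨[], [x, y], I, x.2, x.1 + y.1, by simp, ?_, ?_, by simp, by simp⟩
  · intro p hp
    rcases List.mem_cons.1 hp with h1 | h1
    · subst h1; rfl
    · simp at h1; subst h1; exact hc.symm
  · push_cast; simp

lemma co_append_left (pre : CComp r) {T T' : CComp r} (h : Co T T') :
    Co (pre ++ T) (pre ++ T') := by
  induction pre with
  | nil => simpa using h
  | cons p pre ih => exact Co.block p ih

lemma step_co {A B : CComp r} (h : Step A B) : Co A B := by
  obtain ⟨pre, mid, post, b, m, h1, h2, h3, rfl, rfl⟩ := h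
  rw [List.append_assoc]
  apply co_append_left
  exact Co.block_append mid.length mid rfl h1 b m post post h2 h3 (Co.refl post)

lemma cle_iff_co {I M : CComp r} : CLe M I ↔ Co I M := by
  constructor
  · intro h
    induction h with
    | refl => exact Co.refl I
    | tail h1 h2 ih => exact Co.trans (step_co h2) ih
  · intro h
    induction h with
    | nil => exact Relation.ReflTransGen.refl
    | block x h ih => exact Relation.ReflTransGen.lift (x :: ·) (fun _ _ => step_cons) _ _ ih
    | merge x y hc h ih => exact Relation.ReflTransGen.head (step_merge hc) ih

lemma co_finite : ∀ (n : ℕ) (I : CComp r), I.length ≤ n → {M | Co I M}.Finite := by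
  intro n
  induction n with
  | zero =>
    intro I hI
    rw [List.length_eq_zero_iff.1 (Nat.le_zero.1 hI)]
    refine Set.Finite.subset (Set.finite_singleton []) ?_
    intro M hM
    simp [hM.eq_nil_of_nil]
  | succ n ih =>
    intro I hI
    match I with
    | [] =>
      refine Set.Finite.subset (Set.finite_singleton []) ?_
      intro M hM
      simp [hM.eq_nil_of_nil]
    | [x] =>
      refine Set.Finite.subset (Set.finite_singleton [x]) ?_
      intro M hM
      cases hM with
      | block _ h => simp [h.eq_nil_of_nil]
    | x :: y :: I₂ =>
      have h1 := ih (y :: I₂) (by simp at hI ⊢; omega)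
      have h2 := ih ((x.1 + y.1, x.2) :: I₂) (by simp at hI ⊢; omega)
      refine Set.Finite.subset ((h1.image (x :: ·)).union h2) ?_
      intro M hM
      cases hM with
      | block _ h => exact Or.inl ⟨_, h, rfl⟩
      | merge _ _ _ h => exact Or.inr h

/-- The finset of coarsenings of `I`. -/
def coFin (I : CComp r) : Finset (CComp r) := (co_finite I.length I le_rfl).toFinset

lemma mem_coFin {I M : CComp r} : M ∈ coFin I ↔ Co I M := Set.Finite.mem_toFinset _

lemma rib_eq (I : CComp r) :
    Rib I = ∑ M ∈ coFin I, ((-1 : ℂ) ^ (I.length - M.length)) • S M := by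
  rw [Rib]
  have hset : {J | CLe J I} = ↑(coFin I) := by
    ext M
    simp [mem_coFin, cle_iff_co]
  rw [hset, finsum_mem_coe_finset]

lemma S_cons (p : ℕ+ × Fin r) (L : CComp r) : S (p :: L) = FreeAlgebra.ι ℂ p * S L := by
  simp [S]

lemma rib_singleton (a : ℕ+ × Fin r) : Rib [a] = FreeAlgebra.ι ℂ a := by
  have h : coFin [a] = {[a]} := by
    ext M
    simp only [mem_coFin, Finset.mem_singleton]
    constructor
    · intro hM
      cases hM with
      | block _ h => rw [h.eq_nil_of_nil]
    · rintro rfl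
      exact Co.refl _
  rw [rib_eq, h, Finset.sum_singleton]
  simp [S]

lemma image_sum_eq (a : ℕ+ × Fin r) (L : CComp r) :
    ∑ M ∈ (coFin L).image (a :: ·),
        ((-1 : ℂ) ^ ((a :: L).length - M.length)) • S M =
      FreeAlgebra.ι ℂ a * Rib L := by
  rw [Finset.sum_image (by intro x _ y _ h; simpa using h)]
  rw [rib_eq, Finset.mul_sum]
  apply Finset.sum_congr rfl
  intro M hM
  rw [S_cons, mul_smul_comm]
  congr 2
  simp [Nat.succ_sub_succ]

lemma rib_cons (a y : ℕ+ × Fin r) (I : CComp r) :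
    Rib (a :: y :: I) =
      FreeAlgebra.ι ℂ a * Rib (y :: I) -
        (if a.2 = y.2 then Rib ((a.1 + y.1, a.2) :: I) else 0) := by
  by_cases hc : a.2 = y.2
  · rw [if_pos hc]
    have hsplit : coFin (a :: y :: I) =
        (coFin (y :: I)).image (a :: ·) ∪ coFin ((a.1 + y.1, a.2) :: I) := by
      ext M
      simp only [Finset.mem_union, Finset.mem_image, mem_coFin]
      constructor
      · intro hM
        cases hM with
        | block _ h => exact Or.inl ⟨_, h, rfl⟩
        | merge _ _ _ h => exact Or.inr h
      · rintro (⟨M', hM', rfl⟩ | hM)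
        · exact Co.block a hM'
        · exact Co.merge a y hc hM
    have hdisj : Disjoint ((coFin (y :: I)).image (a :: ·))
        (coFin ((a.1 + y.1, a.2) :: I)) := by
      rw [Finset.disjoint_left]
      rintro M hM1 hM2
      simp only [Finset.mem_image, mem_coFin] at hM1 hM2
      obtain ⟨M', hM', rfl⟩ := hM1
      obtain ⟨n, M'', hEq, hn⟩ := hM2.head_ge _ _ rfl
      injection hEq with h1 h2
      have hfst : (a.1 : ℕ) = (n : ℕ) := by
        exact_mod_cast congrArg (fun p => ((Prod.fst p : ℕ+) : ℕ)) h1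
      have hle : (a.1 : ℕ) + (y.1 : ℕ) ≤ (n : ℕ) := by exact_mod_cast hn
      have hy := y.1.pos
      omega
    rw [rib_eq, hsplit, Finset.sum_union hdisj, image_sum_eq, sub_eq_add_neg]
    congr 1
    rw [rib_eq, ← Finset.sum_neg_distrib]
    apply Finset.sum_congr rfl
    intro M hM
    have hlen : M.length ≤ ((a.1 + y.1, a.2) :: I).length := (mem_coFin.1 hM).length_le
    simp only [List.length_cons] at hlen ⊢
    have hexp : I.length + 1 + 1 - M.length = (I.length + 1 - M.length) + 1 := by omega
    rw [hexp, pow_succ, mul_comm, neg_one_mul, neg_smul]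
  · rw [if_neg hc, sub_zero]
    have hsplit : coFin (a :: y :: I) = (coFin (y :: I)).image (a :: ·) := by
      ext M
      simp only [Finset.mem_image, mem_coFin]
      constructor
      · intro hM
        cases hM with
        | block _ h => exact ⟨_, h, rfl⟩
        | merge _ _ h _ => exact absurd h hc
      · rintro ⟨M', hM', rfl⟩
        exact Co.block a hM'
    rw [rib_eq, hsplit, image_sum_eq]

lemma core' : ∀ (n : ℕ) (I₀ : CComp r), I₀.length ≤ n → ∀ (ℓ j : ℕ+ × Fin r) (J' : CComp r),
    Rib (I₀ ++ [ℓ]) * Rib (j :: J') =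
      Rib (I₀ ++ ℓ :: j :: J') +
        (if ℓ.2 = j.2 then Rib (I₀ ++ (ℓ.1 + j.1, ℓ.2) :: J') else 0) := by
  intro n
  induction n with
  | zero =>
    intro I₀ h ℓ j J'
    rw [List.length_eq_zero_iff.1 (Nat.le_zero.1 h)]
    simp only [List.nil_append]
    rw [rib_singleton, rib_cons ℓ j J']
    by_cases hc : ℓ.2 = j.2
    · rw [if_pos hc]; abel
    · rw [if_neg hc]; abel
  | succ n ih =>
    rintro (_ | ⟨a, (_ | ⟨b, I₀''⟩)⟩) hlen ℓ j J'
    · exact ih [] (Nat.zero_le n) ℓ j J'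
    · -- I₀ = [a]
      have IH1 := ih [] (Nat.zero_le n) ℓ j J'
      have IH2 := ih [] (Nat.zero_le n) (a.1 + ℓ.1, a.2) j J'
      simp only [List.nil_append] at IH1 IH2
      have hrc := rib_cons a ℓ []
      have E1 := rib_cons a ℓ (j :: J')
      have E2 := rib_cons a (ℓ.1 + j.1, ℓ.2) J'
      dsimp only at E2
      rw [← add_assoc] at E2
      simp only [List.singleton_append, List.cons_append, List.nil_append]
      by_cases hc₁ : a.2 = ℓ.2
      · by_cases hc₂ : ℓ.2 = j.2
        · have hc₃ : a.2 = j.2 := hc₁.trans hc₂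
          rw [if_pos hc₂] at IH1
          rw [if_pos hc₃] at IH2
          rw [if_pos hc₁] at hrc E1 E2
          rw [hrc, sub_mul, mul_assoc, IH1, IH2, if_pos hc₂, E1, E2, mul_add]
          abel
        · have hc₃ : ¬ a.2 = j.2 := fun h => hc₂ (hc₁.symm.trans h)
          rw [if_neg hc₂, add_zero] at IH1
          rw [if_neg hc₃, add_zero] at IH2
          rw [if_pos hc₁] at hrc E1
          rw [hrc, sub_mul, mul_assoc, IH1, IH2, if_neg hc₂, E1, add_zero]
      · by_cases hc₂ : ℓ.2 = j.2
        · rw [if_pos hc₂] at IH1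
          rw [if_neg hc₁, sub_zero] at hrc E1 E2
          rw [hrc, mul_assoc, IH1, if_pos hc₂, E1, E2, mul_add]
        · rw [if_neg hc₂, add_zero] at IH1
          rw [if_neg hc₁, sub_zero] at hrc E1
          rw [hrc, mul_assoc, IH1, if_neg hc₂, E1, add_zero]
    · -- I₀ = a :: b :: I₀''
      have hlen' : (b :: I₀'').length ≤ n := by simp at hlen ⊢; omega
      have hlenK : ((a.1 + b.1, a.2) :: I₀'').length ≤ n := by simp at hlen ⊢; omega
      have IH1 := ih (b :: I₀'') hlen' ℓ j J'
      have IH2 := ih ((a.1 + b.1, a.2) :: I₀'') hlenK ℓ j J'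
      simp only [List.cons_append] at IH1 IH2
      have hrc := rib_cons a b (I₀'' ++ [ℓ])
      have E1 := rib_cons a b (I₀'' ++ ℓ :: j :: J')
      have E2 := rib_cons a b (I₀'' ++ (ℓ.1 + j.1, ℓ.2) :: J')
      simp only [List.cons_append]
      by_cases hc₁ : a.2 = b.2
      · by_cases hc₂ : ℓ.2 = j.2
        · rw [if_pos hc₂] at IH1 IH2
          rw [if_pos hc₁] at hrc E1 E2
          rw [hrc, sub_mul, mul_assoc, IH1, IH2, if_pos hc₂, E1, E2, mul_add]
          abel
        · rw [if_neg hc₂, add_zero] at IH1 IH2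
          rw [if_pos hc₁] at hrc E1
          rw [hrc, sub_mul, mul_assoc, IH1, IH2, if_neg hc₂, E1, add_zero]
      · by_cases hc₂ : ℓ.2 = j.2
        · rw [if_pos hc₂] at IH1
          rw [if_neg hc₁, sub_zero] at hrc E1 E2
          rw [hrc, mul_assoc, IH1, if_pos hc₂, E1, E2, mul_add]
        · rw [if_neg hc₂, add_zero] at IH1
          rw [if_neg hc₁, sub_zero] at hrc E1
          rw [hrc, mul_assoc, IH1, if_neg hc₂, E1, add_zero]

/-- the colored ribbon multiplication rule
`R_{(I,u)} R_{(J,v)} = R_{(I,u)·(J,v)} + R_{(I,u)▷(J,v)}` if `u_p = v_1`, and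
`R_{(I,u)} R_{(J,v)} = R_{(I,u)·(J,v)}` if `u_p ≠ v_1`. -/
theorem ribbon_mul (r : ℕ) (hr : 1 ≤ r) (I J : CComp r) (hI : I ≠ []) (hJ : J ≠ []) :
    Rib I * Rib J =
      if (I.getLast hI).2 = (J.head hJ).2 then
        Rib (I ++ J) +
          Rib (I.dropLast ++
            ((I.getLast hI).1 + (J.head hJ).1, (I.getLast hI).2) :: J.tail)
      else Rib (I ++ J) := by
  obtain ⟨j, J', rfl⟩ : ∃ j J', J = j :: J' := by
    cases J with
    | nil => exact absurd rfl hJ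
    | cons j J' => exact ⟨j, J', rfl⟩
  obtain ⟨I₀, ℓ, rfl⟩ : ∃ I₀ ℓ, I = I₀ ++ [ℓ] := by
    refine ⟨I.dropLast, I.getLast hI, ?_⟩
    exact (List.dropLast_concat_getLast hI).symm
  have h := core' I₀.length I₀ le_rfl ℓ j J'
  simp only [List.getLast_concat, List.head_cons, List.tail_cons, List.dropLast_concat,
    List.append_assoc, List.singleton_append]
  split_ifs with h'
  · rw [h, if_pos h']
  · rw [h, if_neg h', add_zero]


end MR
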